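/- Let H be a digraph and t ≥ 2, and let f be a t-frugal homomorphism of the gadget F to H, where F consists of a chain of copies of F₀ forcing u₁,…,u_{t−1} to a common image, a further copy of F₀ forcing v₁ and v₂ to a common image, and a vertex q with arcs from each of u₁,…,u_{t−1}, v₁, v₂ to q. Then f(u₁) ≠ f(v₁). -/
import Mathlib


/-- Vertices of the gadget `F`: `u i` (the shared endpoints `u₁,…,u_{t-1}`, valid for
`i < t - 1`), the chain copies of `F₀` (`x j`, `y j` and common in-neighbours `a j k`,
valid for `j < t - 2`, `k < m`, where copy `j` joins `u j` and `u (j+1)`), the extra copy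
of `F₀` on `v₂, v₁` (vertices `v1`, `v2`, `xv`, `yv`, `av k`), and the apex `q`. -/
inductive FV : Type
  | u : ℕ → FV
  | x : ℕ → FV
  | y : ℕ → FV
  | a : ℕ → ℕ → FV
  | v1 : FV
  | v2 : FV
  | xv : FV
  | yv : FV
  | av : ℕ → FV
  | q : FV
  deriving DecidableEq

/-- Arcs of the gadget `F` (with `m = t·Δ⁻(H) - 1` common in-neighbours in each copy of
`F₀`): each chain copy `j` has arcs `u j → x j`, `u (j+1) → y j`, `a j k → x j`,
`a j k → y j`; the extra copy has `v₂ → xv`, `v₁ → yv`, `av k → xv`, `av k → yv`; and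
`q` receives arcs from `u 0, …, u (t-2)`, `v₁` and `v₂`. -/
def FArc (t m : ℕ) : FV → FV → Prop := fun p r =>
  match p, r with
  | .u i, .x j => i = j ∧ j < t - 2
  | .u i, .y j => i = j + 1 ∧ j < t - 2
  | .a i k, .x j => i = j ∧ j < t - 2 ∧ k < m
  | .a i k, .y j => i = j ∧ j < t - 2 ∧ k < m
  | .v2, .xv => True
  | .v1, .yv => True
  | .av k, .xv => k < m
  | .av k, .yv => k < m
  | .u i, .q => i < t - 1
  | .v1, .q => True
  | .v2, .q => True
  | _, _ => False

lemma cardOptSubtype_pos {α : Type*} [Finite α] {p : Option α → Prop} (hp : p none) :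
    Nat.card {s : Option α // p s} = Nat.card {a : α // p (some a)} + 1 := by
  rw [← Finite.card_option]
  exact Nat.card_congr
    ⟨fun s => match s with | ⟨none, _⟩ => none | ⟨some a, h⟩ => some ⟨a, h⟩,
     fun o => match o with | none => ⟨none, hp⟩ | some ⟨a, h⟩ => ⟨some a, h⟩,
     by rintro ⟨_ | a, h⟩ <;> rfl, by rintro (_ | ⟨a, h⟩) <;> rfl⟩

lemma cardOptSubtype_neg {α : Type*} {p : Option α → Prop} (hp : ¬ p none) :
    Nat.card {s : Option α // p s} = Nat.card {a : α // p (some a)} :=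
  Nat.card_congr
    ⟨fun s => match s with | ⟨none, h⟩ => absurd h hp | ⟨some a, h⟩ => ⟨a, h⟩,
     fun a => ⟨some a.1, a.2⟩,
     fun s => match s with | ⟨none, h⟩ => absurd h hp | ⟨some a, h⟩ => rfl,
     fun a => rfl⟩

lemma frugal_fiber_card {W : Type*} [Finite W] (B : W → W → Prop)
    {A : Type*} [Fintype A] {t d : ℕ}
    (g : A → W) (w : W)
    (harc : ∀ a, B (g a) w)
    (hfib : ∀ h : W, Nat.card {a : A // g a = h} ≤ t)
    (hcard : Fintype.card A = t * d)
    (hd' : Nat.card {u : W // B u w} ≤ d) :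
    ∀ h : W, (∃ a, g a = h) → Nat.card {a : A // g a = h} = t := by
  classical
  haveI : Fintype {u : W // B u w} := Fintype.ofFinite _
  set C := {u : W // B u w} with hC
  let g' : A → C := fun a => ⟨g a, harc a⟩
  have key : ∀ c : C, (Finset.univ.filter fun a => g' a = c).card
      = Nat.card {a : A // g a = c.1} := by
    intro c
    rw [Nat.card_eq_fintype_card, Fintype.card_subtype]
    congr 1
    ext a
    simp only [Finset.mem_filter, Finset.mem_univ, true_and]
    exact Subtype.ext_iff
  have hsum : ∑ c : C, (Finset.univ.filter fun a => g' a = c).card = t * d := by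
    rw [← hcard, Fintype.card,
      Finset.card_eq_sum_card_fiberwise (fun a _ => Finset.mem_univ (g' a))]
  have hle : ∀ c : C, (Finset.univ.filter fun a => g' a = c).card ≤ t := by
    intro c; rw [key c]; exact hfib c.1
  have hCd : Fintype.card C ≤ d := by rw [← Nat.card_eq_fintype_card]; exact hd'
  have hall : ∀ c : C, (Finset.univ.filter fun a => g' a = c).card = t := by
    by_contra hcon
    push_neg at hcon
    obtain ⟨c0, hc0⟩ := hcon
    have hlt : (Finset.univ.filter fun a => g' a = c0).card < t :=
      lt_of_le_of_ne (hle c0) hc0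
    have hstrict : ∑ c : C, (Finset.univ.filter fun a => g' a = c).card
        < ∑ _c : C, t :=
      Finset.sum_lt_sum (fun c _ => hle c) ⟨c0, Finset.mem_univ _, hlt⟩
    rw [Finset.sum_const, smul_eq_mul, Finset.card_univ] at hstrict
    have h2 : Fintype.card C * t ≤ d * t := Nat.mul_le_mul_right t hCd
    have h3 : t * d < d * t := by
      calc t * d = _ := hsum.symm
        _ < Fintype.card C * t := hstrict
        _ ≤ d * t := h2
    simp [Nat.mul_comm t d] at h3
  rintro h ⟨a0, rfl⟩
  have := hall (g' a0)
  rw [key] at this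
  exact this

lemma ends_eq {W : Type*} {t m : ℕ} (ht : 2 ≤ t) (g0 g1 : W) (ga : Fin m → W)
    (hx : ∀ h : W, (∃ s : Option (Fin m), s.elim g0 ga = h) →
      Nat.card {s : Option (Fin m) // s.elim g0 ga = h} = t)
    (hy : ∀ h : W, (∃ s : Option (Fin m), s.elim g1 ga = h) →
      Nat.card {s : Option (Fin m) // s.elim g1 ga = h} = t) : g0 = g1 := by
  by_contra hne
  have h0 : Nat.card {s : Option (Fin m) // s.elim g0 ga = g0} = t := hx g0 ⟨none, rfl⟩
  rw [cardOptSubtype_pos (p := fun s => s.elim g0 ga = g0) rfl] at h0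
  simp only [Option.elim_some] at h0
  have hpos : 0 < Nat.card {k : Fin m // ga k = g0} := by omega
  obtain ⟨⟨k0, hk0⟩⟩ := (Nat.card_pos_iff.mp hpos).1
  have h1 : Nat.card {s : Option (Fin m) // s.elim g1 ga = g0} = t := hy g0 ⟨some k0, hk0⟩
  rw [cardOptSubtype_neg (p := fun s => s.elim g1 ga = g0) (by simpa using Ne.symm hne)] at h1
  simp only [Option.elim_some] at h1
  omega

lemma copy_lemma {W : Type*} [Finite W] (B : W → W → Prop) {t d m : ℕ}
    (ht : 2 ≤ t) (hm : m + 1 = t * d)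
    {V : Type*} (Arc : V → V → Prop) (f : V → W)
    (hhom : ∀ p r, Arc p r → B (f p) (f r))
    (hfrugal : ∀ (v : V) (h : W), Nat.card {p : V // Arc p v ∧ f p = h} ≤ t)
    (hd' : ∀ w : W, Nat.card {u : W // B u w} ≤ d)
    (vx vy w0 w1 : V) (A : Fin m → V)
    (hx : ∀ p, Arc p vx ↔ (p = w0 ∨ ∃ k, p = A k))
    (hy : ∀ p, Arc p vy ↔ (p = w1 ∨ ∃ k, p = A k))
    (hw0 : ∀ k, A k ≠ w0) (hw1 : ∀ k, A k ≠ w1)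
    (hA : Function.Injective A) :
    f w0 = f w1 := by
  classical
  have main : ∀ (v w' : V), (∀ p, Arc p v ↔ (p = w' ∨ ∃ k, p = A k)) → (∀ k, A k ≠ w') →
      ∀ h : W, (∃ s : Option (Fin m), s.elim (f w') (fun k => f (A k)) = h) →
        Nat.card {s : Option (Fin m) // s.elim (f w') (fun k => f (A k)) = h} = t := by
    intro v w' hv hw
    set g : Option (Fin m) → W := fun s => s.elim (f w') (fun k => f (A k)) with hg
    have hEf : ∀ s : Option (Fin m), f (s.elim w' A) = g s := by rintro (_ | k) <;> rfl
    let E : Option (Fin m) ≃ {p : V // Arc p v} :=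
      Equiv.ofBijective
        (fun s => ⟨s.elim w' A, by
          cases s with
          | none => exact (hv _).2 (Or.inl rfl)
          | some k => exact (hv _).2 (Or.inr ⟨k, rfl⟩)⟩)
        (by
          constructor
          · rintro (_ | k) (_ | l) hkl <;> simp [Subtype.ext_iff] at hkl
            · exact rfl
            · exact absurd hkl.symm (hw l)
            · exact absurd hkl (hw k)
            · exact congrArg some (hA hkl)
          · rintro ⟨p, hp⟩
            rcases (hv p).1 hp with rfl | ⟨k, rfl⟩
            · exact ⟨none, rfl⟩
            · exact ⟨some k, rfl⟩)
    have fiberEquiv : ∀ h : W,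
        {s : Option (Fin m) // g s = h} ≃ {p : V // Arc p v ∧ f p = h} := by
      intro h
      exact (E.subtypeEquiv (q := fun sp => f sp.1 = h)
        (fun s => by
          change g s = h ↔ f ((E s).1) = h
          rw [show f ((E s).1) = g s from hEf s])).trans
        (Equiv.subtypeSubtypeEquivSubtypeInter (fun p => Arc p v) (fun p => f p = h))
    have harc : ∀ s, B (g s) (f v) := by
      rintro (_ | k)
      · exact hhom _ _ ((hv w').2 (Or.inl rfl))
      · exact hhom _ _ ((hv (A k)).2 (Or.inr ⟨k, rfl⟩))
    have hfib : ∀ h : W, Nat.card {s : Option (Fin m) // g s = h} ≤ t := by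
      intro h
      rw [Nat.card_congr (fiberEquiv h)]
      exact hfrugal v h
    have hcard : Fintype.card (Option (Fin m)) = t * d := by
      simp [hm.symm]
    exact frugal_fiber_card B g (f v) harc hfib hcard (hd' (f v))
  exact ends_eq ht (f w0) (f w1) (fun k => f (A k)) (main vx w0 hx hw0) (main vy w1 hy hw1)

/-- For a digraph `H` with maximum in-degree `d ≥ 1` and `t ≥ 2`, every
`t`-frugal homomorphism `f` of the gadget `F` to `H` satisfies `f(u₁) ≠ f(v₁)`. -/
theorem gadget_separates {W : Type*} [Finite W] (B : W → W → Prop) (t d : ℕ)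
    (ht : 2 ≤ t) (hd : 1 ≤ d)
    (hmax : IsGreatest (Set.range fun v : W => Nat.card {u : W // B u v}) d)
    (f : FV → W)
    (hhom : ∀ p r, FArc t (t * d - 1) p r → B (f p) (f r))
    (hfrugal : ∀ (v : FV) (h : W),
      Nat.card {p : FV // FArc t (t * d - 1) p v ∧ f p = h} ≤ t) :
    f (FV.u 0) ≠ f FV.v1 := by
  set m := t * d - 1 with hmdef
  have htd : 1 ≤ t * d := Nat.one_le_iff_ne_zero.mpr (by positivity)
  have hm : m + 1 = t * d := by omega
  have hd' : ∀ w : W, Nat.card {u : W // B u w} ≤ d := fun w => hmax.2 ⟨w, rfl⟩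
  -- chain step
  have step : ∀ j, j < t - 2 → f (FV.u j) = f (FV.u (j + 1)) := by
    intro j hj
    refine copy_lemma B ht hm (FArc t m) f hhom hfrugal hd'
      (FV.x j) (FV.y j) (FV.u j) (FV.u (j + 1)) (fun k => FV.a j k) ?_ ?_ ?_ ?_ ?_
    · intro p
      cases p <;> simp only [FArc, hj, and_true, true_and] <;>
        simp [eq_comm, Fin.exists_iff] <;> omega
    · intro p
      cases p <;> simp only [FArc, hj, and_true, true_and] <;>
        simp [eq_comm, Fin.exists_iff] <;> omega
    · intro k; simp
    · intro k; simp
    · intro k l hkl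
      simp only [FV.a.injEq] at hkl
      exact Fin.ext hkl.2
  have hu : ∀ i, i < t - 1 → f (FV.u i) = f (FV.u 0) := by
    intro i
    induction i with
    | zero => intro _; rfl
    | succ i ih =>
      intro hi
      have h1 : i < t - 2 := by omega
      exact (step i h1).symm.trans (ih (by omega))
  have hv : f FV.v2 = f FV.v1 := by
    refine copy_lemma B ht hm (FArc t m) f hhom hfrugal hd'
      FV.xv FV.yv FV.v2 FV.v1 (fun k => FV.av k) ?_ ?_ ?_ ?_ ?_
    · intro p
      cases p <;> simp [FArc, eq_comm, Fin.exists_iff]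
    · intro p
      cases p <;> simp [FArc, eq_comm, Fin.exists_iff]
    · intro k; simp
    · intro k; simp
    · intro k l hkl
      simp only [FV.av.injEq] at hkl
      exact Fin.ext hkl
  intro heq
  set h := f (FV.u 0) with hh
  have E2 : (Fin (t - 1) ⊕ Bool) ≃ {p : FV // FArc t m p FV.q ∧ f p = h} := by
    refine Equiv.ofBijective
      (fun s => match s with
        | .inl i => ⟨FV.u i, i.2, hu i i.2⟩
        | .inr false => ⟨FV.v1, trivial, heq.symm⟩
        | .inr true => ⟨FV.v2, trivial, hv.trans heq.symm⟩) ⟨?_, ?_⟩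
    · rintro (i | (_ | _)) (i' | (_ | _)) hE <;>
        simp only [Subtype.mk.injEq] at hE <;>
        first
          | rfl
          | exact FV.noConfusion hE
          | exact congrArg Sum.inl (Fin.ext (by injection hE))
    · rintro ⟨p, hp, hph⟩
      cases p <;> simp only [FArc] at hp
      · exact ⟨.inl ⟨_, hp⟩, rfl⟩
      · exact ⟨.inr false, rfl⟩
      · exact ⟨.inr true, rfl⟩
  have hcard : Nat.card (Fin (t - 1) ⊕ Bool) = t + 1 := by
    simp [Nat.card_eq_fintype_card]
    omega
  have := hfrugal FV.q h
  rw [← Nat.card_congr E2, hcard] at this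
  omega
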